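/- Any deterministic algorithm solving size discovery on all radio networks of size at most n, using labeling schemes in which every label is a binary string of length less than (1/4)·log₂ n, must run for Ω(log² n) rounds on some network; specifically, assuming the existence of bipartite graphs H_m with sides of size m whose every bipartite broadcast schedule has size > c·log² m, no algorithm with such labels can always terminate within (c/2)·log² n rounds. -/

import Mathlib

attribute [local instance] Classical.propDecidable

/-- The communication history of each node after `t` rounds in the radio model
**without collision detection**: each round a node records `some m` if it listens and
exactly one of its neighbors transmits (with message `m`), and `none` otherwise (own
transmission, collision, or silence). The deterministic algorithm `step` maps a node's
label and current history to `some m` = "transmit `m`" or `none` = "listen". -/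
noncomputable def hist17 {V : Type*} (G : SimpleGraph V) (L : V → List Bool)
    (step : List Bool → List (Option (List Bool)) → Option (List Bool)) :
    ℕ → V → List (Option (List Bool))
  | 0, _ => []
  | t + 1, v =>
    let H : V → List (Option (List Bool)) := hist17 G L step t
    let tx : V → Prop := fun u => (step (L u) (H u)).isSome
    let ev : Option (List Bool) :=
      if tx v then none
      else if h : ∃! u, G.Adj v u ∧ tx u then step (L h.exists.choose) (H h.exists.choose)
      else none
    H v ++ [ev]

/-- `H` is bipartite with sides the left and right copies of `Fin m`: every edge joins
a left vertex to a right vertex. -/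
def Bipartite17 {m : ℕ} (H : SimpleGraph (Fin m ⊕ Fin m)) : Prop :=
  ∀ x y, H.Adj x y → (x.isLeft ∧ y.isRight) ∨ (x.isRight ∧ y.isLeft)

/-- A bipartite broadcast schedule of size `k` for `H`: a sequence `Us 0, …, Us (k-1)`
of subsets of the left side such that every right vertex has, in some round `i < k`,
exactly one neighbor in `Us i`. -/
def IsSchedule17 {m : ℕ} (H : SimpleGraph (Fin m ⊕ Fin m)) (k : ℕ)
    (Us : ℕ → Set (Fin m)) : Prop :=
  ∀ v : Fin m, ∃ i < k, ∃! u : Fin m, H.Adj (Sum.inl u) (Sum.inr v) ∧ u ∈ Us i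

/-! ### Auxiliary material -/

/-- Binary encoding of lists of booleans (with a leading 1). -/
def enc17 : List Bool → ℕ
  | [] => 1
  | b :: t => 2 * enc17 t + b.toNat

lemma enc17_pos (l : List Bool) : 1 ≤ enc17 l := by
  induction l with
  | nil => simp [enc17]
  | cons b t ih => simp only [enc17]; omega

lemma enc17_lt (l : List Bool) : enc17 l < 2 ^ (l.length + 1) := by
  induction l with
  | nil => simp [enc17]
  | cons b t ih =>
    simp only [enc17, List.length_cons]
    have : b.toNat ≤ 1 := Bool.toNat_le b
    have h2 : 2 ^ (t.length + 1 + 1) = 2 * 2 ^ (t.length + 1) := by ring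
    omega

lemma enc17_inj : Function.Injective enc17 := by
  intro a
  induction a with
  | nil =>
    intro b h
    cases b with
    | nil => rfl
    | cons y s =>
      exfalso
      have := enc17_pos s
      simp only [enc17] at h
      have : y.toNat ≤ 1 := Bool.toNat_le y
      omega
  | cons x t ih =>
    intro b h
    cases b with
    | nil =>
      exfalso
      have := enc17_pos t
      simp only [enc17] at h
      have : x.toNat ≤ 1 := Bool.toNat_le x
      omega
    | cons y s =>
      simp only [enc17] at h
      have hx : x.toNat ≤ 1 := Bool.toNat_le x
      have hy : y.toNat ≤ 1 := Bool.toNat_le y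
      have hxy : x.toNat = y.toNat := by omega
      have hts : enc17 t = enc17 s := by omega
      have hb : x = y := by
        cases x <;> cases y <;> simp_all
      rw [hb, ih hts]

/-- Transport of histories along an isomorphism of labeled graphs. -/
lemma hist17_equiv {V W : Type*} (e : V ≃ W) (G : SimpleGraph V) (G' : SimpleGraph W)
    (hAdj : ∀ a b, G.Adj a b ↔ G'.Adj (e a) (e b))
    (L : V → List Bool) (step : List Bool → List (Option (List Bool)) → Option (List Bool)) :
    ∀ (t : ℕ) (v : V), hist17 G' (L ∘ e.symm) step t (e v) = hist17 G L step t v := by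
  intro t
  induction t with
  | zero => intro v; rfl
  | succ t ih =>
    intro v
    have hL : ∀ u : V, (L ∘ e.symm) (e u) = L u := fun u => by simp
    have hstep : ∀ u : V,
        step ((L ∘ e.symm) (e u)) (hist17 G' (L ∘ e.symm) step t (e u))
          = step (L u) (hist17 G L step t u) := fun u => by rw [hL, ih]
    have hPiff : ∀ u : V,
        (G.Adj v u ∧ ((step (L u) (hist17 G L step t u)).isSome : Prop)) ↔
        (G'.Adj (e v) (e u) ∧
          ((step ((L ∘ e.symm) (e u)) (hist17 G' (L ∘ e.symm) step t (e u))).isSome : Prop)) :=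
      fun u => and_congr (hAdj v u) (by rw [hstep])
    simp only [hist17]
    rw [hstep v, ih v]
    by_cases h1 : ((step (L v) (hist17 G L step t v)).isSome : Prop)
    · rw [if_pos h1, if_pos h1]
    · rw [if_neg h1, if_neg h1]
      by_cases h2 : ∃! u, G.Adj v u ∧ ((step (L u) (hist17 G L step t u)).isSome : Prop)
      · have h2' : ∃! w, G'.Adj (e v) w ∧
            ((step ((L ∘ e.symm) w) (hist17 G' (L ∘ e.symm) step t w)).isSome : Prop) :=
          (Equiv.existsUnique_congr e hPiff).mp h2
        rw [dif_pos h2, dif_pos h2']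
        have hch : h2'.exists.choose = e h2.exists.choose :=
          h2'.unique h2'.exists.choose_spec ((hPiff _).mp h2.exists.choose_spec)
        rw [hch, hL, ih]
      · rw [dif_neg h2, dif_neg (fun h' => h2 ((Equiv.existsUnique_congr e hPiff).mpr h'))]

/-- The bipartite graph `H` with a universal source attached to the left side. -/
def attach17 {m : ℕ} (H : SimpleGraph (Fin m ⊕ Fin m)) :
    SimpleGraph ((Fin m ⊕ Fin m) ⊕ Unit) :=
  SimpleGraph.fromRel (fun x y =>
    (∃ a b, x = Sum.inl a ∧ y = Sum.inl b ∧ H.Adj a b) ∨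
    (x = Sum.inr () ∧ ∃ u, y = Sum.inl (Sum.inl u)))

lemma attach17_adj_inl {m : ℕ} (H : SimpleGraph (Fin m ⊕ Fin m)) (a b : Fin m ⊕ Fin m) :
    (attach17 H).Adj (Sum.inl a) (Sum.inl b) ↔ H.Adj a b := by
  simp only [attach17, SimpleGraph.fromRel_adj]
  constructor
  · rintro ⟨hne, (⟨a', b', ha, hb, hadj⟩ | ⟨hsrc, -⟩) | (⟨a', b', ha, hb, hadj⟩ | ⟨hsrc, -⟩)⟩
    · cases ha; cases hb; exact hadj
    · exact absurd hsrc (by simp)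
    · cases ha; cases hb; exact hadj.symm
    · exact absurd hsrc (by simp)
  · intro hadj
    exact ⟨by simpa using hadj.ne, Or.inl (Or.inl ⟨a, b, rfl, rfl, hadj⟩)⟩

lemma attach17_adj_src {m : ℕ} (H : SimpleGraph (Fin m ⊕ Fin m)) (u : Fin m) :
    (attach17 H).Adj (Sum.inr ()) (Sum.inl (Sum.inl u)) := by
  simp only [attach17, SimpleGraph.fromRel_adj]
  refine ⟨by simp, Or.inl (Or.inr ⟨?_, u, ?_⟩)⟩ <;> trivial

lemma attach17_adj_right {m : ℕ} (H : SimpleGraph (Fin m ⊕ Fin m)) (hbip : Bipartite17 H)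
    (v : Fin m) (w : (Fin m ⊕ Fin m) ⊕ Unit) :
    (attach17 H).Adj (Sum.inl (Sum.inr v)) w ↔
      ∃ u : Fin m, w = Sum.inl (Sum.inl u) ∧ H.Adj (Sum.inl u) (Sum.inr v) := by
  simp only [attach17, SimpleGraph.fromRel_adj]
  constructor
  · rintro ⟨hne, (⟨a', b', ha, hb, hadj⟩ | ⟨hsrc, -⟩) | (⟨a', b', ha, hb, hadj⟩ | ⟨hsrc, u, hu⟩)⟩
    · cases ha
      rcases hbip _ _ hadj with ⟨hl, -⟩ | ⟨-, hl⟩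
      · simp at hl
      · obtain ⟨u, rfl⟩ := Sum.isLeft_iff.mp hl
        exact ⟨u, hb, hadj.symm⟩
    · exact absurd hsrc (by simp)
    · cases hb
      rcases hbip _ _ hadj with ⟨hl, -⟩ | ⟨-, hr⟩
      · obtain ⟨u, rfl⟩ := Sum.isLeft_iff.mp hl
        exact ⟨u, ha, hadj⟩
      · simp at hr
    · exact absurd hu (by simp)
  · rintro ⟨u, rfl, hadj⟩
    exact ⟨by simp, Or.inr (Or.inl ⟨Sum.inl u, Sum.inr v, rfl, rfl, hadj⟩)⟩

lemma attach17_connected {m : ℕ} (H : SimpleGraph (Fin m ⊕ Fin m)) (hbip : Bipartite17 H)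
    (hiso : ∀ x, ∃ y, H.Adj x y) : (attach17 H).Connected := by
  have key : ∀ w, (attach17 H).Reachable (Sum.inr ()) w := by
    rintro ((u | v) | ⟨⟩)
    · exact (attach17_adj_src H u).reachable
    · obtain ⟨y, hy⟩ := hiso (Sum.inr v)
      rcases hbip _ _ hy with ⟨hl, -⟩ | ⟨-, hl⟩
      · simp at hl
      · obtain ⟨u, rfl⟩ := Sum.isLeft_iff.mp hl
        exact (attach17_adj_src H u).reachable.trans
          ((attach17_adj_inl H (Sum.inl u) (Sum.inr v)).mpr hy.symm).reachable
    · exact SimpleGraph.Reachable.refl _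
  rw [SimpleGraph.connected_iff]
  exact ⟨fun x y => (key x).symm.trans (key y), ⟨Sum.inr ()⟩⟩

/-- The equivalence between `Fin (2m+1)` and the vertex set of the attached graph. -/
noncomputable def equiv17 (m : ℕ) : Fin (2 * m + 1) ≃ (Fin m ⊕ Fin m) ⊕ Unit :=
  (finCongr (by omega : 2 * m + 1 = m + m + 1)).trans
    (finSumFinEquiv.symm.trans
      (Equiv.sumCongr finSumFinEquiv.symm (Equiv.ofUnique (Fin 1) Unit)))

/-- Key lemma: on the attached network, some right node has an all-silent history,
and its output must be the network size. -/
lemma silent17 {mi : ℕ} (H : SimpleGraph (Fin mi ⊕ Fin mi)) (hbip : Bipartite17 H)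
    (hiso : ∀ x, ∃ y, H.Adj x y)
    (step : List Bool → List (Option (List Bool)) → Option (List Bool))
    (out : List Bool → List (Option (List Bool)) → ℕ) (T : ℕ) (P : ℕ → Prop)
    (hT : ∀ Us : ℕ → Set (Fin mi), ¬ IsSchedule17 H T Us)
    (hyp : ∀ G : SimpleGraph (Fin (2 * mi + 1)), G.Connected →
      ∃ L : Fin (2 * mi + 1) → List Bool, (∀ v, P (L v).length) ∧
        (∀ v, out (L v) (hist17 G L step T v) = 2 * mi + 1)) :
    ∃ ℓ : List Bool, P ℓ.length ∧ out ℓ (List.replicate T none) = 2 * mi + 1 := by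
  classical
  set GW := attach17 H with hGW
  set e : Fin (2 * mi + 1) ≃ (Fin mi ⊕ Fin mi) ⊕ Unit := equiv17 mi with he
  set G : SimpleGraph (Fin (2 * mi + 1)) := GW.comap e with hG
  have hGadj : ∀ a b, G.Adj a b ↔ GW.Adj (e a) (e b) := fun a b => Iff.rfl
  have hGconn : G.Connected := by
    have hc' := attach17_connected H hbip hiso
    exact hc'.map ⟨e.symm, fun {a b} h => by
      simpa [hG, SimpleGraph.comap_adj] using h⟩ e.symm.surjective
  obtain ⟨L, hlen, hout⟩ := hyp G hGconn
  set L' : (Fin mi ⊕ Fin mi) ⊕ Unit → List Bool := L ∘ e.symm with hL'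
  have htrans : ∀ t v, hist17 GW L' step t (e v) = hist17 G L step t v :=
    hist17_equiv e G GW hGadj L step
  have hv : ∃ v : Fin mi, ∀ t, t < T → ¬ ∃! u : Fin mi,
      H.Adj (Sum.inl u) (Sum.inr v) ∧
        ((step (L' (Sum.inl (Sum.inl u)))
          (hist17 GW L' step t (Sum.inl (Sum.inl u)))).isSome : Prop) := by
    by_contra hcon
    push_neg at hcon
    apply hT (fun t => {u : Fin mi |
      ((step (L' (Sum.inl (Sum.inl u)))
        (hist17 GW L' step t (Sum.inl (Sum.inl u)))).isSome : Prop)})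
    intro v
    obtain ⟨t, ht, hu⟩ := hcon v
    exact ⟨t, ht, hu⟩
  obtain ⟨v, hvsil⟩ := hv
  have hsil : ∀ t, t ≤ T →
      hist17 GW L' step t (Sum.inl (Sum.inr v)) = List.replicate t none := by
    intro t
    induction t with
    | zero => intro _; rfl
    | succ t ih =>
      intro hle
      have ht : t < T := by omega
      simp only [hist17]
      have hEv : (if ((step (L' (Sum.inl (Sum.inr v)))
            (hist17 GW L' step t (Sum.inl (Sum.inr v)))).isSome : Prop) then none
          else if h : ∃! u, GW.Adj (Sum.inl (Sum.inr v)) u ∧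
              ((step (L' u) (hist17 GW L' step t u)).isSome : Prop) then
            step (L' h.exists.choose) (hist17 GW L' step t h.exists.choose)
          else none) = none := by
        by_cases h1 : ((step (L' (Sum.inl (Sum.inr v)))
            (hist17 GW L' step t (Sum.inl (Sum.inr v)))).isSome : Prop)
        · rw [if_pos h1]
        · rw [if_neg h1]
          have hnot : ¬ ∃! u, GW.Adj (Sum.inl (Sum.inr v)) u ∧
              ((step (L' u) (hist17 GW L' step t u)).isSome : Prop) := by
            intro hex
            obtain ⟨w, ⟨hadj, htx⟩, huniq⟩ := hex
            obtain ⟨u, rfl, hadj'⟩ := (attach17_adj_right H hbip v w).mp hadj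
            apply hvsil t ht
            refine ⟨u, ⟨hadj', htx⟩, ?_⟩
            rintro u' ⟨hadj'', htx'⟩
            have h3 := huniq (Sum.inl (Sum.inl u'))
              ⟨(attach17_adj_right H hbip v _).mpr ⟨u', rfl, hadj''⟩, htx'⟩
            exact Sum.inl.inj (Sum.inl.inj h3)
          rw [dif_neg hnot]
      rw [hEv, ih (by omega), ← List.replicate_succ']
  refine ⟨L' (Sum.inl (Sum.inr v)), hlen _, ?_⟩
  have hfin := hout (e.symm (Sum.inl (Sum.inr v)))
  have h2 : hist17 G L step T (e.symm (Sum.inl (Sum.inr v))) = List.replicate T none := by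
    rw [← htrans T (e.symm (Sum.inl (Sum.inr v))), e.apply_symm_apply, hsil T le_rfl]
  rw [h2] at hfin
  exact hfin

/-- assuming (Alon–Bar-Noy–Linial–Peleg) that for all large `m` there is a
bipartite graph with sides of size `m`, no isolated vertices, whose every bipartite
broadcast schedule has size `> c·log₂² m`, the following holds for all sufficiently
large `n`: no deterministic algorithm running in at most `(c/2)·log₂² n` rounds and
using labels of length `< (1/4)·log₂ n` can solve size discovery on all (connected)
radio networks of size at most `n`. -/
theorem stmt17 (c : ℝ) (hc : 0 < c)
    (hH : ∃ m₀ : ℕ, ∀ m : ℕ, m₀ ≤ m →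
      ∃ H : SimpleGraph (Fin m ⊕ Fin m), Bipartite17 H ∧
        (∀ x, ∃ y, H.Adj x y) ∧
        (∀ (k : ℕ) (Us : ℕ → Set (Fin m)), IsSchedule17 H k Us →
          c * (Real.logb 2 m) ^ 2 < k)) :
    ∃ n₀ : ℕ, ∀ n : ℕ, n₀ ≤ n →
      ∀ (step : List Bool → List (Option (List Bool)) → Option (List Bool))
        (out : List Bool → List (Option (List Bool)) → ℕ) (T : ℕ),
        (T : ℝ) ≤ c / 2 * (Real.logb 2 n) ^ 2 →
        ¬ (∀ k : ℕ, k ≤ n → ∀ G : SimpleGraph (Fin k), G.Connected →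
            ∃ L : Fin k → List Bool,
              (∀ v, ((L v).length : ℝ) < Real.logb 2 n / 4) ∧
              (∀ v, out (L v) (hist17 G L step T v) = k)) := by
  obtain ⟨m₀, hm₀⟩ := hH
  refine ⟨max (8 * m₀ + 8) 4096, ?_⟩
  intro n hn step out T hT hyp
  set m := n / 8 with hm
  have hn4096 : 4096 ≤ n := le_trans (le_max_right _ _) hn
  have hnm0 : 8 * m₀ + 8 ≤ n := le_trans (le_max_left _ _) hn
  have hm512 : 512 ≤ m := by omega
  have hmm0 : m₀ < m := by omega
  have h8m : 8 * m ≤ n ∧ n < 8 * m + 8 := by omega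
  -- basic real facts
  have hnpos : (0:ℝ) < n := by positivity
  have ha12 : (12:ℝ) ≤ Real.logb 2 n := by
    have h1 : Real.logb 2 4096 ≤ Real.logb 2 n :=
      Real.logb_le_logb_of_le one_lt_two (by norm_num) (by exact_mod_cast hn4096)
    have h2 : Real.logb 2 (4096:ℝ) = 12 := by
      rw [show (4096:ℝ) = 2^(12:ℕ) by norm_num, Real.logb_pow]
      norm_num [Real.logb_self_eq_one]
    linarith
  set a := Real.logb 2 n with ha
  -- per-index construction
  have key : ∀ i : Fin m, ∃ ℓ : List Bool, ((ℓ.length : ℝ) < a / 4) ∧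
      out ℓ (List.replicate T none) = 2 * (m + (i : ℕ) + 1) + 1 := by
    intro i
    have hilt : (i : ℕ) < m := i.isLt
    set mi := m + (i : ℕ) + 1 with hmi
    obtain ⟨H, hbip, hiso, hsched⟩ := hm₀ mi (by omega)
    have hTmi : ∀ Us : ℕ → Set (Fin mi), ¬ IsSchedule17 H T Us := by
      intro Us hUs
      have hlt := hsched T Us hUs
      set b := Real.logb 2 mi with hb
      have hmi8 : (n : ℝ) / 8 < (mi : ℝ) := by
        have : (n : ℝ) < 8 * (mi : ℝ) := by
          have : n < 8 * mi := by omega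
          exact_mod_cast this
        linarith
      have hb3 : a - 3 ≤ b := by
        have h8 : Real.logb 2 ((n:ℝ)/8) = a - 3 := by
          rw [Real.logb_div (by positivity) (by norm_num),
            show (8:ℝ) = 2^(3:ℕ) by norm_num, Real.logb_pow]
          norm_num [Real.logb_self_eq_one]
          rfl
        have := Real.logb_le_logb_of_le one_lt_two (by positivity) hmi8.le
        rw [h8] at this
        exact this
      have hbig : c / 2 * a ^ 2 ≤ c * b ^ 2 := by
        have h1 : (9:ℝ) ≤ a - 3 := by linarith
        have h2 : (a - 3) ^ 2 ≤ b ^ 2 := pow_le_pow_left₀ (by linarith) hb3 2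
        have h3 : a ^ 2 ≤ 2 * (a - 3) ^ 2 := by
          have h6 : (6:ℝ) ≤ a - 6 := by linarith
          have h36 : (36:ℝ) ≤ (a - 6) ^ 2 := by
            calc (36:ℝ) = 6 * 6 := by norm_num
              _ ≤ (a - 6) * (a - 6) := by
                  apply mul_le_mul h6 h6 (by norm_num) (by linarith)
              _ = (a - 6) ^ 2 := by ring
          have hexp : 2 * (a - 3) ^ 2 - a ^ 2 = (a - 6) ^ 2 - 18 := by ring
          linarith
        calc c / 2 * a ^ 2 ≤ c / 2 * (2 * (a - 3) ^ 2) :=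
              mul_le_mul_of_nonneg_left h3 (by positivity)
          _ = c * (a - 3) ^ 2 := by ring
          _ ≤ c * b ^ 2 := mul_le_mul_of_nonneg_left h2 hc.le
      linarith
    exact silent17 H hbip hiso step out T (fun q => (q : ℝ) < a / 4) hTmi
      (fun G hG => hyp (2 * mi + 1) (by omega) G hG)
  choose lab hlen hout using key
  -- pigeonhole on the encodings of the silent labels
  have henc : ∀ i : Fin m, enc17 (lab i) ∈ Finset.Ico 1 m := by
    intro i
    have hlt := hlen i
    set l := (lab i).length with hl
    have h16 : (16:ℕ) ^ l < n := by
      have h1 : ((16:ℕ) ^ l : ℝ) = (2:ℝ) ^ ((4 * l : ℕ) : ℝ) := by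
        rw [Real.rpow_natCast]
        push_cast
        rw [pow_mul]
        norm_num
      have h2 : (2:ℝ) ^ ((4 * l : ℕ) : ℝ) < (2:ℝ) ^ a := by
        apply (Real.rpow_lt_rpow_left_iff (by norm_num : (1:ℝ) < 2)).mpr
        push_cast
        linarith
      have h3 : (2:ℝ) ^ a = n := Real.rpow_logb (by norm_num) (by norm_num) hnpos
      have : ((16:ℕ) ^ l : ℝ) < (n : ℝ) := by rw [h1]; rw [← h3] at *; linarith
      exact_mod_cast this
    have hm4 : 16 * n ≤ m ^ 4 := by
      have h129 : 129 ≤ m * m * m :=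
        le_trans (by omega : 129 ≤ m) (Nat.le_mul_of_pos_left m (by positivity))
      have h2 : 129 * m ≤ m * m * m * m := Nat.mul_le_mul_right m h129
      have hp : m ^ 4 = m * m * m * m := by ring
      omega
    have h164 : 16 ^ (l + 1) < m ^ 4 := by
      calc 16 ^ (l + 1) = 16 * 16 ^ l := by ring
        _ < 16 * n := by omega
        _ ≤ m ^ 4 := hm4
    have h2m : 2 ^ (l + 1) < m := by
      by_contra hcon
      push_neg at hcon
      have : m ^ 4 ≤ (2 ^ (l + 1)) ^ 4 := Nat.pow_le_pow_left hcon 4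
      have he : (2 ^ (l + 1)) ^ 4 = 16 ^ (l + 1) := by
        rw [← pow_mul, show 16 = 2 ^ 4 from rfl, ← pow_mul]
        ring_nf
      omega
    have henc2 : enc17 (lab i) < 2 ^ (l + 1) := enc17_lt (lab i)
    exact Finset.mem_Ico.mpr ⟨enc17_pos _, by omega⟩
  have hcard : (Finset.Ico 1 m).card < (Finset.univ : Finset (Fin m)).card := by
    simp [Nat.card_Ico]
    omega
  obtain ⟨i, -, j, -, hij, heq⟩ :=
    Finset.exists_ne_map_eq_of_card_lt_of_maps_to hcard (fun i _ => henc i)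
  have hlab : lab i = lab j := enc17_inj heq
  have h1 := hout i
  have h2 := hout j
  rw [hlab] at h1
  rw [h1] at h2
  have : (i : ℕ) = (j : ℕ) := by omega
  exact hij (Fin.ext this)
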